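/- In the setup of the modified recurrence step, after the successful parity projection and applying the CNOT from d1 to d2, the normalized post-measurement state on r1,d1 equals (1 - q/2)|φ⟩⟨φ| + (q/2) (I⊗Z)|φ⟩⟨φ|(I⊗Z), where |φ⟩ = (|00⟩+|11⟩)/√2 and q = 4p(1-p); in particular the state is independent of the damping parameter g. -/
import Mathlib


open Matrix Kronecker

/-- The three Kraus operators of the damping-dephasing channel. -/
noncomputable def Ops (p g : ℝ) : Fin 3 → Matrix (Fin 2) (Fin 2) ℂ :=
  ![!![(Real.sqrt (1 - p) : ℂ), 0;
      0, (Real.sqrt (1 - p) : ℂ) * (Real.sqrt (1 - g) : ℂ)],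
    !![0, (Real.sqrt g : ℂ); 0, 0],
    !![(Real.sqrt p : ℂ), 0;
      0, -((Real.sqrt p : ℂ) * (Real.sqrt (1 - g) : ℂ))]]

/-- Pauli `X` matrix. -/
def PauliX : Matrix (Fin 2) (Fin 2) ℂ := !![0, 1; 1, 0]

/-- Pauli `Z` matrix. -/
def PauliZ : Matrix (Fin 2) (Fin 2) ℂ := !![1, 0; 0, -1]

/-- The state vector `|ψ₁⟩ = (|0⟩|01⟩ + |1⟩|10⟩)/√2` on `r ⊗ a1 ⊗ a2`. -/
noncomputable def psi1 : Fin 2 × Fin 2 × Fin 2 → ℂ := fun x =>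
  if x = ((0 : Fin 2), (0 : Fin 2), (1 : Fin 2)) then ((Real.sqrt 2 : ℝ) : ℂ)⁻¹
  else if x = ((1 : Fin 2), (1 : Fin 2), (0 : Fin 2)) then ((Real.sqrt 2 : ℝ) : ℂ)⁻¹
  else 0

/-- The density operator `|ψ₁⟩⟨ψ₁|`. -/
noncomputable def psi1Op : Matrix (Fin 2 × Fin 2 × Fin 2) (Fin 2 × Fin 2 × Fin 2) ℂ :=
  Matrix.of fun a b => psi1 a * (starRingEnd ℂ) (psi1 b)

/-- Kraus operator `I ⊗ O_i ⊗ O_j` of `id ⊗ F ⊗ F`. -/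
noncomputable def Kop (p g : ℝ) (i j : Fin 3) :
    Matrix (Fin 2 × Fin 2 × Fin 2) (Fin 2 × Fin 2 × Fin 2) ℂ :=
  (1 : Matrix (Fin 2) (Fin 2) ℂ) ⊗ₖ (Ops p g i ⊗ₖ Ops p g j)

/-- The state after sending `a1, a2` through `F ⊗ F`. -/
noncomputable def psi2 (p g : ℝ) :
    Matrix (Fin 2 × Fin 2 × Fin 2) (Fin 2 × Fin 2 × Fin 2) ℂ :=
  ∑ i : Fin 3, ∑ j : Fin 3, Kop p g i j * psi1Op * (Kop p g i j)ᴴ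

/-- The parity projector `Π = (I - Z_{d1} Z_{d2})/2` on `d1, d2`. -/
noncomputable def parityProj :
    Matrix (Fin 2 × Fin 2 × Fin 2) (Fin 2 × Fin 2 × Fin 2) ℂ :=
  (2 : ℂ)⁻¹ • ((1 : Matrix (Fin 2 × Fin 2 × Fin 2) (Fin 2 × Fin 2 × Fin 2) ℂ) -
    (1 : Matrix (Fin 2) (Fin 2) ℂ) ⊗ₖ (PauliZ ⊗ₖ PauliZ))

/-- The CNOT `|0⟩⟨0| ⊗ I + |1⟩⟨1| ⊗ X` from `d1` to `d2`, extended by the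
identity on `r`. -/
def cnotD1D2 : Matrix (Fin 2 × Fin 2 × Fin 2) (Fin 2 × Fin 2 × Fin 2) ℂ :=
  (1 : Matrix (Fin 2) (Fin 2) ℂ) ⊗ₖ
    ((!![1, 0; 0, 0] : Matrix (Fin 2) (Fin 2) ℂ) ⊗ₖ (1 : Matrix (Fin 2) (Fin 2) ℂ) +
     (!![0, 0; 0, 1] : Matrix (Fin 2) (Fin 2) ℂ) ⊗ₖ PauliX)

/-- The maximally entangled state vector `|φ⟩ = (|00⟩ + |11⟩)/√2`. -/
noncomputable def phiVec : Fin 2 × Fin 2 → ℂ := fun x =>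
  if x.1 = x.2 then ((Real.sqrt 2 : ℝ) : ℂ)⁻¹ else 0

/-- The maximally entangled density operator `|φ⟩⟨φ|`. -/
noncomputable def phiOp : Matrix (Fin 2 × Fin 2) (Fin 2 × Fin 2) ℂ :=
  Matrix.of fun a b => phiVec a * (starRingEnd ℂ) (phiVec b)

/-- The target state `(1-q/2)|φ⟩⟨φ| + (q/2)(I⊗Z)|φ⟩⟨φ|(I⊗Z)` on `r1, d1`,
with `q = 4p(1-p)`. -/
noncomputable def targetState (p : ℝ) : Matrix (Fin 2 × Fin 2) (Fin 2 × Fin 2) ℂ :=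
  ((1 - 4 * p * (1 - p) / 2 : ℝ) : ℂ) • phiOp +
  ((4 * p * (1 - p) / 2 : ℝ) : ℂ) •
    (((1 : Matrix (Fin 2) (Fin 2) ℂ) ⊗ₖ PauliZ) * phiOp *
      ((1 : Matrix (Fin 2) (Fin 2) ℂ) ⊗ₖ PauliZ))

/-- Coefficient of `|001⟩` in `C·Π·K_{ij}|ψ₁⟩`. -/
noncomputable def Wc1 (p g : ℝ) : Fin 3 → Fin 3 → ℂ :=
  ![![(Real.sqrt (1-p) : ℂ) * (Real.sqrt (1-p) : ℂ) * (Real.sqrt (1-g) : ℂ) *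
        ((Real.sqrt 2 : ℝ) : ℂ)⁻¹, 0,
     -((Real.sqrt (1-p) : ℂ) * (Real.sqrt p : ℂ) * (Real.sqrt (1-g) : ℂ) *
        ((Real.sqrt 2 : ℝ) : ℂ)⁻¹)],
    ![0, 0, 0],
    ![(Real.sqrt (1-p) : ℂ) * (Real.sqrt p : ℂ) * (Real.sqrt (1-g) : ℂ) *
        ((Real.sqrt 2 : ℝ) : ℂ)⁻¹, 0,
      -((Real.sqrt p : ℂ) * (Real.sqrt p : ℂ) * (Real.sqrt (1-g) : ℂ) *
        ((Real.sqrt 2 : ℝ) : ℂ)⁻¹)]]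

/-- Coefficient of `|111⟩` in `C·Π·K_{ij}|ψ₁⟩`. -/
noncomputable def Wc2 (p g : ℝ) : Fin 3 → Fin 3 → ℂ :=
  ![![(Real.sqrt (1-p) : ℂ) * (Real.sqrt (1-p) : ℂ) * (Real.sqrt (1-g) : ℂ) *
        ((Real.sqrt 2 : ℝ) : ℂ)⁻¹, 0,
     (Real.sqrt (1-p) : ℂ) * (Real.sqrt p : ℂ) * (Real.sqrt (1-g) : ℂ) *
        ((Real.sqrt 2 : ℝ) : ℂ)⁻¹],
    ![0, 0, 0],
    ![-((Real.sqrt (1-p) : ℂ) * (Real.sqrt p : ℂ) * (Real.sqrt (1-g) : ℂ) *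
        ((Real.sqrt 2 : ℝ) : ℂ)⁻¹), 0,
      -((Real.sqrt p : ℂ) * (Real.sqrt p : ℂ) * (Real.sqrt (1-g) : ℂ) *
        ((Real.sqrt 2 : ℝ) : ℂ)⁻¹)]]

/-- The vector `C·Π·K_{ij}|ψ₁⟩`. -/
noncomputable def Wf (p g : ℝ) (i j : Fin 3) (a : Fin 2 × Fin 2 × Fin 2) : ℂ :=
  ∑ c, (cnotD1D2 * parityProj * Kop p g i j) a c * psi1 c

/-- Closed form of `Wf`. -/
noncomputable def Wval (p g : ℝ) (i j : Fin 3) (a : Fin 2 × Fin 2 × Fin 2) : ℂ :=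
  if a = ((0 : Fin 2), (0 : Fin 2), (1 : Fin 2)) then Wc1 p g i j
  else if a = ((1 : Fin 2), (1 : Fin 2), (1 : Fin 2)) then Wc2 p g i j
  else 0

lemma parityProj_herm : parityProjᴴ = parityProj := by
  ext ⟨a1, a2, a3⟩ ⟨b1, b2, b3⟩
  simp only [parityProj, PauliZ, Matrix.conjTranspose_apply, Matrix.smul_apply,
        Matrix.sub_apply, Matrix.one_apply, Matrix.kroneckerMap_apply, star_smul, star_sub,
        star_one, RCLike.star_def, map_sub]
  fin_cases a1 <;> fin_cases a2 <;> fin_cases a3 <;>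
    fin_cases b1 <;> fin_cases b2 <;> fin_cases b3 <;>
      norm_num [Prod.ext_iff, Matrix.one_apply, Complex.conj_ofNat]

lemma sandwich (A : Matrix (Fin 2 × Fin 2 × Fin 2) (Fin 2 × Fin 2 × Fin 2) ℂ) :
    A * psi1Op * Aᴴ = Matrix.of (fun a b =>
      (∑ c, A a c * psi1 c) * (starRingEnd ℂ) (∑ c, A b c * psi1 c)) := by
  ext a b
  simp only [Matrix.mul_apply, psi1Op, Matrix.of_apply, Matrix.conjTranspose_apply,
    map_sum, _root_.map_mul, Finset.sum_mul, Finset.mul_sum, RCLike.star_def]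
  refine Finset.sum_congr rfl fun c _ => Finset.sum_congr rfl fun d _ => ?_
  ring

lemma decompose (p g : ℝ) :
    cnotD1D2 * parityProj * psi2 p g * parityProj * cnotD1D2ᴴ =
      ∑ i : Fin 3, ∑ j : Fin 3, Matrix.of (fun a b =>
        Wf p g i j a * (starRingEnd ℂ) (Wf p g i j b)) := by
  rw [psi2]
  simp only [Finset.mul_sum, Finset.sum_mul]
  refine Finset.sum_congr rfl fun i _ => Finset.sum_congr rfl fun j _ => ?_
  have h := sandwich (cnotD1D2 * parityProj * Kop p g i j)
  rw [Matrix.conjTranspose_mul, Matrix.conjTranspose_mul, parityProj_herm] at h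
  simp only [Wf]
  rw [← h]
  simp only [Matrix.mul_assoc]

set_option maxHeartbeats 4000000 in
lemma Wf_eq (p g : ℝ) (i j : Fin 3) (a : Fin 2 × Fin 2 × Fin 2) :
    Wf p g i j a = Wval p g i j a := by
  obtain ⟨a1, a2, a3⟩ := a
  fin_cases i <;> fin_cases j <;> fin_cases a1 <;> fin_cases a2 <;> fin_cases a3 <;>
    simp [Wf, Wval, Wc1, Wc2, cnotD1D2, parityProj, Kop, Ops, psi1, PauliX, PauliZ,
      Matrix.mul_apply, Matrix.smul_apply, Matrix.sub_apply, Matrix.add_apply,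
      Matrix.one_apply, Matrix.kroneckerMap_apply, Fintype.sum_prod_type,
      Fin.sum_univ_two, Prod.ext_iff, Matrix.vecHead, Matrix.vecTail] <;> norm_num <;> ring

set_option maxHeartbeats 4000000 in
theorem post_measurement_state (p g : ℝ)
    (hp : p ∈ Set.Icc (0 : ℝ) (1/2)) (hg : g ∈ Set.Ico (0 : ℝ) 1) :
    ((1 - g : ℝ) : ℂ)⁻¹ •
        (cnotD1D2 * parityProj * psi2 p g * parityProj * cnotD1D2ᴴ) =
      Matrix.of (fun a b : Fin 2 × Fin 2 × Fin 2 =>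
        targetState p (a.1, a.2.1) (b.1, b.2.1) *
          (!![0, 0; 0, 1] : Matrix (Fin 2) (Fin 2) ℂ) a.2.2 b.2.2) := by
  obtain ⟨hp0, hp1⟩ := hp
  obtain ⟨hg0, hg1⟩ := hg
  have h1p : (0:ℝ) ≤ 1 - p := by linarith
  have h1g : (0:ℝ) ≤ 1 - g := by linarith
  have sqp : (Real.sqrt p : ℂ) * (Real.sqrt p : ℂ) = (p : ℂ) := by
    norm_cast; exact Real.mul_self_sqrt hp0
  have sq1p : (Real.sqrt (1-p) : ℂ) * (Real.sqrt (1-p) : ℂ) = ((1-p : ℝ) : ℂ) := by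
    norm_cast; exact Real.mul_self_sqrt h1p
  have sq1g : (Real.sqrt (1-g) : ℂ) * (Real.sqrt (1-g) : ℂ) = ((1-g : ℝ) : ℂ) := by
    norm_cast; exact Real.mul_self_sqrt h1g
  have sq2 : ((Real.sqrt 2 : ℝ) : ℂ) * ((Real.sqrt 2 : ℝ) : ℂ) = 2 := by
    norm_cast; rw [Real.mul_self_sqrt]; norm_num
  have h2ne : ((Real.sqrt 2 : ℝ) : ℂ) ≠ 0 :=
    Complex.ofReal_ne_zero.mpr (by positivity)
  have hgne : ((1 - g : ℝ) : ℂ) ≠ 0 :=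
    Complex.ofReal_ne_zero.mpr (by intro h; linarith)
  have hgne' : (1:ℂ) - (g:ℂ) ≠ 0 := by
    intro h
    apply hgne
    push_cast
    rw [h]
  have hp2 : ((Real.sqrt p : ℝ):ℂ)^2 = (p:ℂ) := by rw [sq]; exact sqp
  have hp4 : ((Real.sqrt p : ℝ):ℂ)^4 = (p:ℂ)^2 := by
    rw [show (4:ℕ)=2*2 from rfl, pow_mul, hp2]
  have h1p2 : ((Real.sqrt (1-p) : ℝ):ℂ)^2 = 1-(p:ℂ) := by rw [sq, sq1p]; push_cast; ring
  have h1p4 : ((Real.sqrt (1-p) : ℝ):ℂ)^4 = (1-(p:ℂ))^2 := by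
    rw [show (4:ℕ)=2*2 from rfl, pow_mul, h1p2]
  have h1g2 : ((Real.sqrt (1-g) : ℝ):ℂ)^2 = 1-(g:ℂ) := by rw [sq, sq1g]; push_cast; ring
  have h1g4 : ((Real.sqrt (1-g) : ℝ):ℂ)^4 = (1-(g:ℂ))^2 := by
    rw [show (4:ℕ)=2*2 from rfl, pow_mul, h1g2]
  have h22 : ((Real.sqrt 2 : ℝ):ℂ)^2 = 2 := by rw [sq]; exact sq2
  have h24 : ((Real.sqrt 2 : ℝ):ℂ)^4 = 4 := by
    rw [show (4:ℕ)=2*2 from rfl, pow_mul, h22]; norm_num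
  have h26 : ((Real.sqrt 2 : ℝ):ℂ)^6 = 8 := by
    rw [show ((Real.sqrt 2 : ℝ):ℂ)^6 = (((Real.sqrt 2 : ℝ):ℂ)^2)^3 by ring, h22]; norm_num
  rw [decompose]
  ext ⟨a1, a2, a3⟩ ⟨b1, b2, b3⟩
  simp only [Matrix.smul_apply, Matrix.sum_apply, Matrix.of_apply, Wf_eq]
  fin_cases a1 <;> fin_cases a2 <;> fin_cases a3 <;>
    fin_cases b1 <;> fin_cases b2 <;> fin_cases b3 <;>
    simp [Wval, Wc1, Wc2, targetState, phiOp, phiVec, PauliZ, Prod.ext_iff,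
      Fin.sum_univ_three, _root_.map_mul, map_neg, map_inv₀, Complex.conj_ofReal,
      Matrix.vecHead, Matrix.vecTail, Matrix.mul_apply, Fintype.sum_prod_type,
      Fin.sum_univ_two, Matrix.kroneckerMap_apply, Matrix.one_apply] <;>
    (try rw [inv_mul_eq_iff_eq_mul₀ hgne']) <;>
    (try field_simp) <;>
    (try (ring_nf; simp only [hp2, hp4, h1p2, h1p4, h1g2, h1g4, h22, h24, h26]; ring))
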